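/- Let (Ψ, d) be a pseudometric space, F : Ψ → ℝ a function satisfying |F(a) − F(b)| ≤ d(a,b) for all a, b ∈ Ψ, and (Ω, ℱ, P) a probability space. Let L ∈ ℕ, ψ₁, …, ψ_L ∈ Ψ, and for each l let Z_l : Ω → ℝ be a square-integrable random variable with E[Z_l] = F(ψ_l) and Var(Z_l) ≤ V for a constant V ≥ 0. Let 0 < τ < 1 and ε > 0. Let ψ̃ : Ω → Ψ and κ : Ω → {1,…,L} be maps such that d(ψ̃(ω), ψ_{κ(ω)}) ≤ τε for every ω ∈ Ω, let Z̃ : Ω → ℝ be a random variable such that W(ω) := |Z_{κ(ω)}(ω) − Z̃(ω)| is measurable with E[W] ≤ τε, and assume ω ↦ F(ψ̃(ω)) is measurable. Then, with probability at least 1 − τ − L·V/ε², one has |F(ψ̃) − Z̃| < (2 + τ)ε. -/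

import Mathlib

open MeasureTheory ProbabilityTheory

/-- Abstract form of Theorem 1: union bound over a finite net, Chebyshev, Markov,
and the Lipschitz property of `F` with respect to the pseudometric. -/
theorem stmt0 {Ψ : Type*} [PseudoMetricSpace Ψ]
    {Ω : Type*} [MeasurableSpace Ω] (μ : Measure Ω) [IsProbabilityMeasure μ]
    (F : Ψ → ℝ) (hF : ∀ a b : Ψ, |F a - F b| ≤ dist a b)
    (L : ℕ) (ψ : Fin L → Ψ) (Z : Fin L → Ω → ℝ)
    (hZsq : ∀ l, MemLp (Z l) 2 μ)
    (hmean : ∀ l, ∫ ω, Z l ω ∂μ = F (ψ l))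
    (V : ℝ) (hV : 0 ≤ V) (hvar : ∀ l, variance (Z l) μ ≤ V)
    (τ ε : ℝ) (hτ0 : 0 < τ) (hτ1 : τ < 1) (hε : 0 < ε)
    (ψt : Ω → Ψ) (κ : Ω → Fin L)
    (hnear : ∀ ω, dist (ψt ω) (ψ (κ ω)) ≤ τ * ε)
    (Zt : Ω → ℝ)
    (hWmeas : Measurable fun ω => |Z (κ ω) ω - Zt ω|)
    (hW : ∫⁻ ω, ENNReal.ofReal |Z (κ ω) ω - Zt ω| ∂μ ≤ ENNReal.ofReal (τ * ε))
    (hFmeas : Measurable fun ω => F (ψt ω)) :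
    ENNReal.ofReal (1 - τ - (L : ℝ) * V / ε ^ 2) ≤
      μ {ω | |F (ψt ω) - Zt ω| < (2 + τ) * ε} := by
  set A : Fin L → Set Ω := fun l => {ω | ε ≤ |Z l ω - F (ψ l)|} with hA
  set B : Set Ω := {ω | ε ≤ |Z (κ ω) ω - Zt ω|} with hB
  -- Chebyshev
  have hAle : ∀ l, μ (A l) ≤ ENNReal.ofReal (V / ε ^ 2) := by
    intro l
    have h := meas_ge_le_variance_div_sq (μ := μ) (hZsq l) hε
    have hm : μ[Z l] = F (ψ l) := hmean l
    rw [hm] at h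
    refine h.trans (ENNReal.ofReal_le_ofReal ?_)
    exact div_le_div_of_nonneg_right (hvar l) (by positivity) |>.trans_eq rfl
  -- Markov
  have hBle : μ B ≤ ENNReal.ofReal τ := by
    have hmeas : AEMeasurable (fun ω => ENNReal.ofReal |Z (κ ω) ω - Zt ω|) μ :=
      (hWmeas.ennreal_ofReal).aemeasurable
    have h := meas_ge_le_lintegral_div hmeas (ε := ENNReal.ofReal ε)
      (by simp [hε]) (by simp)
    have hset : {x | ENNReal.ofReal ε ≤ ENNReal.ofReal |Z (κ x) x - Zt x|} = B := by
      ext x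
      simp [hB, ENNReal.ofReal_le_ofReal_iff (abs_nonneg _)]
    rw [hset] at h
    refine h.trans ?_
    calc (∫⁻ ω, ENNReal.ofReal |Z (κ ω) ω - Zt ω| ∂μ) / ENNReal.ofReal ε
        ≤ ENNReal.ofReal (τ * ε) / ENNReal.ofReal ε := by gcongr
      _ = ENNReal.ofReal (τ * ε / ε) := (ENNReal.ofReal_div_of_pos hε).symm
      _ = ENNReal.ofReal τ := by rw [mul_div_assoc, div_self hε.ne', mul_one]
  -- inclusion of the bad event
  have hincl : {ω | (2 + τ) * ε ≤ |F (ψt ω) - Zt ω|} ⊆ B ∪ ⋃ l, A l := by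
    intro ω hω
    by_contra hc
    simp only [Set.mem_union, not_or] at hc
    obtain ⟨hωB, hωA⟩ := hc
    have h1 : |Z (κ ω) ω - Zt ω| < ε := by
      simpa [hB] using not_le.mp hωB
    have h2 : |Z (κ ω) ω - F (ψ (κ ω))| < ε := by
      have h2' : ω ∉ A (κ ω) := fun h => hωA (Set.mem_iUnion.mpr ⟨κ ω, h⟩)
      simpa [hA] using not_le.mp h2'
    have h3 : |F (ψt ω) - F (ψ (κ ω))| ≤ τ * ε := (hF _ _).trans (hnear ω)
    have : |F (ψt ω) - Zt ω| < (2 + τ) * ε := by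
      have := abs_sub_le (F (ψt ω)) (F (ψ (κ ω))) (Zt ω)
      have h4 := abs_sub_le (F (ψ (κ ω))) (Z (κ ω) ω) (Zt ω)
      have h2' : |F (ψ (κ ω)) - Z (κ ω) ω| < ε := by rwa [abs_sub_comm]
      nlinarith
    exact absurd hω (not_le.mpr this)
  have hbad : μ {ω | (2 + τ) * ε ≤ |F (ψt ω) - Zt ω|} ≤
      ENNReal.ofReal (τ + (L : ℝ) * V / ε ^ 2) := by
    calc μ {ω | (2 + τ) * ε ≤ |F (ψt ω) - Zt ω|}
        ≤ μ (B ∪ ⋃ l, A l) := measure_mono hincl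
      _ ≤ μ B + μ (⋃ l, A l) := measure_union_le _ _
      _ ≤ ENNReal.ofReal τ + ∑ l, μ (A l) := by
          gcongr
          exact measure_iUnion_fintype_le _ _
      _ ≤ ENNReal.ofReal τ + ∑ l : Fin L, ENNReal.ofReal (V / ε ^ 2) := by
          gcongr with l
          exact hAle l
      _ = ENNReal.ofReal τ + (L : ENNReal) * ENNReal.ofReal (V / ε ^ 2) := by
          simp [Finset.sum_const, nsmul_eq_mul]
      _ = ENNReal.ofReal (τ + (L : ℝ) * V / ε ^ 2) := by
          rw [← ENNReal.ofReal_natCast L, ← ENNReal.ofReal_mul (by positivity),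
            ← ENNReal.ofReal_add (le_of_lt hτ0) (by positivity)]
          ring_nf
  -- conclude
  have hsplit : (1 : ENNReal) ≤ μ {ω | |F (ψt ω) - Zt ω| < (2 + τ) * ε} +
      μ {ω | (2 + τ) * ε ≤ |F (ψt ω) - Zt ω|} := by
    have : (Set.univ : Set Ω) ⊆ {ω | |F (ψt ω) - Zt ω| < (2 + τ) * ε} ∪
        {ω | (2 + τ) * ε ≤ |F (ψt ω) - Zt ω|} := by
      intro ω _
      rcases lt_or_ge (|F (ψt ω) - Zt ω|) ((2 + τ) * ε) with h | h
      · exact Or.inl h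
      · exact Or.inr h
    calc (1 : ENNReal) = μ Set.univ := (measure_univ).symm
      _ ≤ μ ({ω | |F (ψt ω) - Zt ω| < (2 + τ) * ε} ∪
          {ω | (2 + τ) * ε ≤ |F (ψt ω) - Zt ω|}) := measure_mono this
      _ ≤ _ := measure_union_le _ _
  have key : (1 : ENNReal) - μ {ω | (2 + τ) * ε ≤ |F (ψt ω) - Zt ω|} ≤
      μ {ω | |F (ψt ω) - Zt ω| < (2 + τ) * ε} := tsub_le_iff_right.mpr hsplit
  refine le_trans ?_ key
  refine le_trans ?_ (tsub_le_tsub_left hbad 1)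
  rcases le_or_gt 1 (τ + (L : ℝ) * V / ε ^ 2) with h | h
  · have : 1 - τ - (L : ℝ) * V / ε ^ 2 ≤ 0 := by linarith
    simp [ENNReal.ofReal_eq_zero.mpr this]
  · rw [← ENNReal.ofReal_one, ← ENNReal.ofReal_sub _ (by positivity)]
    exact ENNReal.ofReal_le_ofReal (by linarith)
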